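/- For a strictly positive n×n matrix A: (1/n)·∑ᵢ∑ⱼ a_{i,j} = max over B ∈ Ω(A) of ρ(B) if and only if (1/n)·∑ᵢ∑ⱼ a_{i,j} = min over B ∈ Ω(A) of ρ(B). -/
import Mathlib

open Matrix Finset

/-- The Perron root: the largest nonnegative real eigenvalue of a matrix. -/
noncomputable def perronRoot {n : ℕ} (A : Matrix (Fin n) (Fin n) ℝ) : ℝ :=
  sSup {r : ℝ | 0 ≤ r ∧ ∃ v : Fin n → ℝ, v ≠ 0 ∧ A.mulVec v = r • v}

/-- Ω(A): matrices obtained by permuting the entries within each row of A independently. -/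
def Omega {n : ℕ} (A : Matrix (Fin n) (Fin n) ℝ) : Set (Matrix (Fin n) (Fin n) ℝ) :=
  {B | ∀ i, ∃ φ : Equiv.Perm (Fin n), ∀ j, B i j = A i (φ j)}

/-- Irreducibility: the directed graph of the matrix is strongly connected. -/
def Irred {n : ℕ} (A : Matrix (Fin n) (Fin n) ℝ) : Prop :=
  ∀ i j, ∃ m : ℕ, 0 < m ∧ 0 < (A ^ m) i j

namespace Stmt13Aux

variable {n : ℕ}

lemma mulVec_apply (M : Matrix (Fin n) (Fin n) ℝ) (v : Fin n → ℝ) (i : Fin n) :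
    M.mulVec v i = ∑ j, M i j * v j := rfl

lemma mulVec_mono (M : Matrix (Fin n) (Fin n) ℝ) (hM : ∀ i j, 0 < M i j)
    {x y : Fin n → ℝ} (hxy : ∀ j, x j ≤ y j) (i : Fin n) :
    M.mulVec x i ≤ M.mulVec y i := by
  simp only [mulVec_apply]
  exact Finset.sum_le_sum fun j _ => mul_le_mul_of_nonneg_left (hxy j) (hM i j).le

lemma mulVec_strict_mono (hn : 0 < n) (M : Matrix (Fin n) (Fin n) ℝ) (hM : ∀ i j, 0 < M i j)
    {x y : Fin n → ℝ} (hxy : ∀ j, x j ≤ y j) (j0 : Fin n) (hst : x j0 < y j0) (i : Fin n) :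
    M.mulVec x i < M.mulVec y i := by
  simp only [mulVec_apply]
  refine Finset.sum_lt_sum (fun j _ => mul_le_mul_of_nonneg_left (hxy j) (hM i j).le)
    ⟨j0, Finset.mem_univ _, ?_⟩
  exact mul_lt_mul_of_pos_left hst (hM i j0)

lemma mulVec_pos (hn : 0 < n) (M : Matrix (Fin n) (Fin n) ℝ) (hM : ∀ i j, 0 < M i j)
    {v : Fin n → ℝ} (hv : ∀ j, 0 < v j) (i : Fin n) : 0 < M.mulVec v i := by
  haveI : Nonempty (Fin n) := ⟨⟨0, hn⟩⟩
  simp only [mulVec_apply]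
  exact Finset.sum_pos (fun j _ => mul_pos (hM i j) (hv j)) Finset.univ_nonempty

lemma mulVec_div (M : Matrix (Fin n) (Fin n) ℝ) (u : Fin n → ℝ) (s : ℝ) :
    M.mulVec (fun i => u i / s) = fun i => M.mulVec u i / s := by
  funext i
  rw [mulVec_apply, mulVec_apply, Finset.sum_div]
  exact Finset.sum_congr rfl fun j _ => (mul_div_assoc _ _ _).symm

lemma mulVec_mul_left (M : Matrix (Fin n) (Fin n) ℝ) (u : Fin n → ℝ) (c : ℝ) :
    M.mulVec (fun i => c * u i) = fun i => c * M.mulVec u i := by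
  funext i
  rw [mulVec_apply, mulVec_apply, Finset.mul_sum]
  exact Finset.sum_congr rfl fun j _ => by ring

/-- Perron–Frobenius existence via Wielandt's compactness argument: a strictly positive
matrix has a real eigenvalue (with real eigenvector) at least `t`, whenever `M w ≥ t w`
for some positive vector `w`. -/
lemma exists_eig_ge (hn : 0 < n) (M : Matrix (Fin n) (Fin n) ℝ) (hM : ∀ i j, 0 < M i j)
    (t : ℝ) (ht : 0 ≤ t) (w : Fin n → ℝ) (hw : ∀ i, 0 < w i)
    (h : ∀ i, t * w i ≤ M.mulVec w i) :
    ∃ x : ℝ, (0 ≤ x ∧ ∃ v : Fin n → ℝ, v ≠ 0 ∧ M.mulVec v = x • v) ∧ t ≤ x := by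
  haveI : Nonempty (Fin n) := ⟨⟨0, hn⟩⟩
  have hne : (univ : Finset (Fin n)).Nonempty := univ_nonempty
  obtain ⟨pmin, hpmin⟩ := Finite.exists_min (fun p : Fin n × Fin n => M p.1 p.2)
  obtain ⟨pmax, hpmax⟩ := Finite.exists_max (fun p : Fin n × Fin n => M p.1 p.2)
  set a : ℝ := M pmin.1 pmin.2 with ha
  set b : ℝ := M pmax.1 pmax.2 with hb
  have hapos : 0 < a := hM _ _
  have hbpos : 0 < b := hM _ _
  have hab : a ≤ b := hpmax (pmin.1, pmin.2)
  have hnb : (0:ℝ) < n * b := mul_pos (by exact_mod_cast hn) hbpos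
  set δ : ℝ := a / (n * b) with hδ
  have hδpos : 0 < δ := div_pos hapos hnb
  set K : Set (Fin n → ℝ) := {v | (∀ i, δ ≤ v i) ∧ ∑ i, v i = 1} with hK
  -- membership of normalized images
  have memK : ∀ v : Fin n → ℝ, (∀ i, 0 ≤ v i) → (∑ i, v i) = 1 →
      0 < (∑ k, M.mulVec v k) ∧ (fun i => M.mulVec v i / (∑ k, M.mulVec v k)) ∈ K := by
    intro v hv hv1
    have hlow : ∀ i, a ≤ M.mulVec v i := by
      intro i
      have : ∑ j, a * v j ≤ ∑ j, M i j * v j :=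
        Finset.sum_le_sum fun j _ => mul_le_mul_of_nonneg_right (hpmin (i, j)) (hv j)
      rw [← Finset.mul_sum, hv1, mul_one] at this
      rw [mulVec_apply]; exact this
    have hup : ∀ i, M.mulVec v i ≤ b := by
      intro i
      have : ∑ j, M i j * v j ≤ ∑ j, b * v j :=
        Finset.sum_le_sum fun j _ => mul_le_mul_of_nonneg_right (hpmax (i, j)) (hv j)
      rw [← Finset.mul_sum, hv1, mul_one] at this
      rw [mulVec_apply]; exact this
    have hSpos : 0 < ∑ k, M.mulVec v k :=
      Finset.sum_pos (fun k _ => lt_of_lt_of_le hapos (hlow k)) hne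
    have hSle : ∑ k, M.mulVec v k ≤ n * b := by
      calc ∑ k, M.mulVec v k ≤ ∑ _k : Fin n, b := Finset.sum_le_sum fun k _ => hup k
        _ = n * b := by simp [Finset.sum_const, Finset.card_univ, nsmul_eq_mul]
    refine ⟨hSpos, ⟨fun i => ?_, ?_⟩⟩
    · rw [hδ, div_le_div_iff₀ hnb hSpos]
      nlinarith [hlow i, hSle, hSpos, hapos]
    · rw [← Finset.sum_div, div_self hSpos.ne']
  -- K is compact and nonempty
  have hKsub : K ⊆ Set.Icc (fun _ => δ) (fun _ => (1:ℝ)) := by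
    rintro v ⟨h1, h2⟩
    constructor
    · intro i; exact h1 i
    · intro i
      have : v i ≤ ∑ j, v j :=
        Finset.single_le_sum (fun j _ => le_trans hδpos.le (h1 j)) (Finset.mem_univ i)
      rw [h2] at this; exact this
  have hKclosed : IsClosed K := by
    have : K = (⋂ i, {v : Fin n → ℝ | δ ≤ v i}) ∩ {v | (∑ i, v i) = 1} := by
      ext v; simp [hK, Set.mem_iInter]
    rw [this]
    exact (isClosed_iInter fun i => isClosed_le continuous_const (continuous_apply i)).inter
      (isClosed_eq (continuous_finset_sum _ fun i _ => continuous_apply i) continuous_const)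
  have hKcpt : IsCompact K := isCompact_Icc.of_isClosed_subset hKclosed hKsub
  have hKne : K.Nonempty := by
    refine ⟨fun _ => 1 / n, fun i => ?_, ?_⟩
    · rw [hδ, div_le_div_iff₀ hnb (by exact_mod_cast hn : (0:ℝ) < n)]
      nlinarith [hab, hbpos, (by exact_mod_cast hn : (0:ℝ) < n)]
    · simp [Finset.sum_const, Finset.card_univ]
      field_simp
  -- the function to maximize
  set g : (Fin n → ℝ) → ℝ := fun v => univ.inf' hne (fun i => M.mulVec v i / v i) with hg
  have hgcont : ContinuousOn g K := by
    apply ContinuousOn.finset_inf'_apply hne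
    intro i _
    apply ContinuousOn.div
    · have e : (fun v : Fin n → ℝ => M.mulVec v i) = fun v => ∑ j, M i j * v j := rfl
      rw [e]
      exact (continuous_finset_sum _ fun j _ =>
        (continuous_const.mul (continuous_apply j))).continuousOn
    · exact (continuous_apply i).continuousOn
    · intro v hv
      exact (lt_of_lt_of_le hδpos (hv.1 i)).ne'
  obtain ⟨v0, hv0K, hv0max⟩ := hKcpt.exists_isMaxOn hKne hgcont
  set r : ℝ := g v0 with hr
  have hv0pos : ∀ i, 0 < v0 i := fun i => lt_of_lt_of_le hδpos (hv0K.1 i)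
  have hge : ∀ i, r * v0 i ≤ M.mulVec v0 i := by
    intro i
    have h1 : r ≤ M.mulVec v0 i / v0 i := Finset.inf'_le _ (Finset.mem_univ i)
    rwa [le_div_iff₀ (hv0pos i)] at h1
  -- `t ≤ r`
  have hrt : t ≤ r := by
    set c : ℝ := ∑ k, w k with hc
    have hcpos : 0 < c := Finset.sum_pos (fun k _ => hw k) hne
    set w1 : Fin n → ℝ := fun i => w i / c with hw1
    have hw1pos : ∀ i, 0 < w1 i := fun i => div_pos (hw i) hcpos
    have hw1sum : ∑ i, w1 i = 1 := by
      rw [hw1, ← Finset.sum_div, ← hc, div_self hcpos.ne']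
    have hMw1 : ∀ i, t * w1 i ≤ M.mulVec w1 i := by
      intro i
      rw [hw1, congrFun (mulVec_div M w c) i]
      rw [show t * (w i / c) = t * w i / c from (mul_div_assoc _ _ _).symm]
      exact (div_le_div_iff_of_pos_right hcpos).mpr (h i)
    obtain ⟨hS1pos, hu1K⟩ := memK w1 (fun i => (hw1pos i).le) hw1sum
    set u1 : Fin n → ℝ := fun i => M.mulVec w1 i / (∑ k, M.mulVec w1 k) with hu1
    have hstep1 : ∀ i, t * M.mulVec w1 i ≤ M.mulVec (M.mulVec w1) i := by
      intro i
      calc t * M.mulVec w1 i = M.mulVec (fun j => t * w1 j) i :=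
            (congrFun (mulVec_mul_left M w1 t) i).symm
        _ ≤ M.mulVec (M.mulVec w1) i := mulVec_mono M hM (fun j => hMw1 j) i
    have hgu1 : t ≤ g u1 := by
      apply Finset.le_inf'
      intro i _
      have hu1pos : 0 < u1 i := div_pos (mulVec_pos hn M hM hw1pos i) hS1pos
      rw [hu1, congrFun (mulVec_div M (M.mulVec w1) _) i, le_div_iff₀ hu1pos]
      rw [show t * (M.mulVec w1 i / (∑ k, M.mulVec w1 k))
          = t * M.mulVec w1 i / (∑ k, M.mulVec w1 k) from (mul_div_assoc _ _ _).symm]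
      exact (div_le_div_iff_of_pos_right hS1pos).mpr (hstep1 i)
    exact hgu1.trans (hv0max hu1K)
  -- `v0` is an eigenvector with eigenvalue `r`
  have heig : ∀ i, M.mulVec v0 i = r * v0 i := by
    by_contra hcon
    push_neg at hcon
    obtain ⟨i0, hi0⟩ := hcon
    have hi0' : r * v0 i0 < M.mulVec v0 i0 := lt_of_le_of_ne (hge i0) (Ne.symm hi0)
    have hw2pos : ∀ i, 0 < M.mulVec v0 i := fun i => mulVec_pos hn M hM hv0pos i
    have hstep : ∀ k, r * M.mulVec v0 k < M.mulVec (M.mulVec v0) k := by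
      intro k
      have h1 : M.mulVec (fun j => r * v0 j) k < M.mulVec (M.mulVec v0) k :=
        mulVec_strict_mono hn M hM (fun j => hge j) i0 hi0' k
      have h2 : M.mulVec (fun j => r * v0 j) k = r * M.mulVec v0 k :=
        congrFun (mulVec_mul_left M v0 r) k
      linarith
    obtain ⟨hS2pos, hu2K⟩ := memK v0 (fun i => (hv0pos i).le) hv0K.2
    have hgu2 : r < g (fun i => M.mulVec v0 i / (∑ k, M.mulVec v0 k)) := by
      rw [hg, Finset.lt_inf'_iff]
      intro i _
      have hu2pos : 0 < M.mulVec v0 i / (∑ k, M.mulVec v0 k) :=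
        div_pos (hw2pos i) hS2pos
      rw [congrFun (mulVec_div M (M.mulVec v0) _) i, lt_div_iff₀ hu2pos]
      rw [show r * (M.mulVec v0 i / (∑ k, M.mulVec v0 k))
          = r * M.mulVec v0 i / (∑ k, M.mulVec v0 k) from (mul_div_assoc _ _ _).symm]
      exact (div_lt_div_iff_of_pos_right hS2pos).mpr (hstep i)
    exact absurd (hv0max hu2K) (not_le.mpr hgu2)
  refine ⟨r, ⟨ht.trans hrt, v0, ?_, ?_⟩, hrt⟩
  · intro h0
    exact absurd (congrFun h0 ⟨0, hn⟩) (hv0pos ⟨0, hn⟩).ne'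
  · funext i
    rw [heig i, Pi.smul_apply, smul_eq_mul]

variable {n : ℕ}

/-- Elementwise Collatz–Wielandt upper bound: any nonnegative real eigenvalue is at most
`max_i (Bv)_i / v_i` for any positive vector `v`. -/
lemma eig_le (B : Matrix (Fin n) (Fin n) ℝ) (hB : ∀ i j, 0 < B i j)
    (v : Fin n → ℝ) (hv : ∀ i, 0 < v i) (t : ℝ)
    (h : ∀ i, B.mulVec v i ≤ t * v i)
    {x : ℝ} (hx : 0 ≤ x) (u : Fin n → ℝ) (hu : u ≠ 0) (heig : B.mulVec u = x • u) :
    x ≤ t := by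
  obtain ⟨j0, hj0⟩ := Function.ne_iff.mp hu
  haveI : Nonempty (Fin n) := ⟨j0⟩
  obtain ⟨i, hi⟩ := Finite.exists_max (fun i => |u i| / v i)
  have hci : 0 < |u i| / v i :=
    lt_of_lt_of_le (div_pos (abs_pos.mpr hj0) (hv j0)) (hi j0)
  have hui : 0 < |u i| := by
    have := mul_pos hci (hv i)
    rwa [div_mul_cancel₀] at this
    exact (hv i).ne'
  have key : ∀ j, |u j| ≤ (|u i| / v i) * v j := by
    intro j
    have := hi j
    rw [div_le_div_iff₀ (hv j) (hv i)] at this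
    rw [div_mul_eq_mul_div, le_div_iff₀ (hv i)]
    linarith
  have step : x * |u i| ≤ t * |u i| := by
    have e1 : x * |u i| = |B.mulVec u i| := by
      rw [heig, Pi.smul_apply, smul_eq_mul, abs_mul, abs_of_nonneg hx]
    have e2 : |B.mulVec u i| ≤ ∑ j, B i j * |u j| := by
      rw [Matrix.mulVec, dotProduct]
      refine (Finset.abs_sum_le_sum_abs _ _).trans ?_
      refine Finset.sum_le_sum fun j _ => ?_
      rw [abs_mul, abs_of_pos (hB i j)]
    have e3 : ∑ j, B i j * |u j| ≤ ∑ j, B i j * ((|u i| / v i) * v j) :=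
      Finset.sum_le_sum fun j _ => mul_le_mul_of_nonneg_left (key j) (hB i j).le
    have e4 : ∑ j, B i j * ((|u i| / v i) * v j) = (|u i| / v i) * B.mulVec v i := by
      rw [Matrix.mulVec, dotProduct, Finset.mul_sum]
      exact Finset.sum_congr rfl fun j _ => by ring
    have e5 : (|u i| / v i) * B.mulVec v i ≤ (|u i| / v i) * (t * v i) :=
      mul_le_mul_of_nonneg_left (h i) hci.le
    have e6 : (|u i| / v i) * (t * v i) = t * |u i| := by
      rw [show (|u i| / v i) * (t * v i) = t * (|u i| / v i * v i) by ring,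
        div_mul_cancel₀ _ (hv i).ne']
    calc x * |u i| = |B.mulVec u i| := e1
      _ ≤ _ := e2
      _ ≤ _ := e3
      _ = _ := e4
      _ ≤ _ := e5
      _ = _ := e6
  exact le_of_mul_le_mul_right step hui

variable {n : ℕ}

lemma perronRoot_le (hn : 0 < n) (B : Matrix (Fin n) (Fin n) ℝ) (hB : ∀ i j, 0 < B i j)
    (v : Fin n → ℝ) (hv : ∀ i, 0 < v i) (t : ℝ)
    (h : ∀ i, B.mulVec v i ≤ t * v i) : perronRoot B ≤ t := by
  have htpos : 0 < t := by
    have h1 := lt_of_lt_of_le (mulVec_pos hn B hB hv ⟨0, hn⟩) (h ⟨0, hn⟩)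
    nlinarith [hv (⟨0, hn⟩ : Fin n)]
  refine Real.sSup_le ?_ htpos.le
  rintro x ⟨hx0, u, hu, he⟩
  exact eig_le B hB v hv t h hx0 u hu he

lemma bddAbove_eigSet (hn : 0 < n) (B : Matrix (Fin n) (Fin n) ℝ) (hB : ∀ i j, 0 < B i j) :
    BddAbove {r : ℝ | 0 ≤ r ∧ ∃ v : Fin n → ℝ, v ≠ 0 ∧ B.mulVec v = r • v} := by
  haveI : Nonempty (Fin n) := ⟨⟨0, hn⟩⟩
  refine ⟨Finset.univ.sup' Finset.univ_nonempty (fun i => ∑ j, B i j), ?_⟩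
  rintro x ⟨hx0, u, hu, he⟩
  refine eig_le B hB (fun _ => 1) (fun _ => one_pos) _ ?_ hx0 u hu he
  intro i
  rw [mulVec_apply, mul_one]
  simp only [mul_one]
  exact Finset.le_sup' (fun i => ∑ j, B i j) (Finset.mem_univ i)

lemma perronRoot_ge (hn : 0 < n) (M : Matrix (Fin n) (Fin n) ℝ) (hM : ∀ i j, 0 < M i j)
    (t : ℝ) (ht : 0 ≤ t) (w : Fin n → ℝ) (hw : ∀ i, 0 < w i)
    (h : ∀ i, t * w i ≤ M.mulVec w i) : t ≤ perronRoot M := by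
  obtain ⟨x, hx, htx⟩ := exists_eig_ge hn M hM t ht w hw h
  exact htx.trans (le_csSup (bddAbove_eigSet hn M hM) hx)

lemma perronRoot_nonneg (B : Matrix (Fin n) (Fin n) ℝ) : 0 ≤ perronRoot B :=
  Real.sSup_nonneg (fun _ hy => hy.1)

lemma omega_pos {A B : Matrix (Fin n) (Fin n) ℝ} (hA : ∀ i j, 0 < A i j)
    (hB : B ∈ Omega A) : ∀ i j, 0 < B i j := by
  intro i j
  obtain ⟨φ, hφ⟩ := hB i
  rw [hφ j]; exact hA _ _

lemma self_mem_omega (A : Matrix (Fin n) (Fin n) ℝ) : A ∈ Omega A :=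
  fun _ => ⟨Equiv.refl _, fun _ => rfl⟩

end Stmt13Aux

theorem stmt13 {n : ℕ} (hn : 0 < n) (A : Matrix (Fin n) (Fin n) ℝ)
    (hA : ∀ i j, 0 < A i j) :
    (∑ i, ∑ j, A i j) / n = sSup (perronRoot '' Omega A) ↔
      (∑ i, ∑ j, A i j) / n = sInf (perronRoot '' Omega A) := by
  haveI : Nonempty (Fin n) := ⟨⟨0, hn⟩⟩
  haveI : NeZero n := ⟨hn.ne'⟩
  have hne : (Finset.univ : Finset (Fin n)).Nonempty := Finset.univ_nonempty
  have hnR : (0:ℝ) < n := by exact_mod_cast hn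
  set rs : Fin n → ℝ := fun i => ∑ j, A i j with hrs
  have hrspos : ∀ i, 0 < rs i := fun i => Finset.sum_pos (fun j _ => hA i j) hne
  set m : ℝ := (∑ i, ∑ j, A i j) / n with hm
  have hm0 : 0 < m := div_pos (Finset.sum_pos (fun i _ => hrspos i) hne) hnR
  have hsum_rs : ∑ j, rs j = n * m := by
    rw [hm]
    have e : (∑ i, ∑ j, A i j) = ∑ j, rs j := rfl
    rw [e]; field_simp
  have hrowsum : ∀ B ∈ Omega A, ∀ i, ∑ j, B i j = rs i := by
    intro B hB i
    obtain ⟨φ, hφ⟩ := hB i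
    calc ∑ j, B i j = ∑ j, A i (φ j) := Finset.sum_congr rfl fun j _ => hφ j
      _ = ∑ j, A i j := Equiv.sum_comp φ (A i)
  set F : Fin n → Equiv.Perm (Fin n) → ℝ := fun i ψ => ∑ j, A i (ψ j) * rs j with hF
  have avg : ∀ (i : Fin n) (ψ : Equiv.Perm (Fin n)),
      ∑ c : Fin n, F i ((Equiv.addRight c).trans ψ) = n * (m * rs i) := by
    intro i ψ
    have inner : ∀ j : Fin n, ∑ c : Fin n, A i (ψ (j + c)) = rs i := by
      intro j
      calc ∑ c : Fin n, A i (ψ (j + c))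
          = ∑ k : Fin n, A i (ψ k) :=
            Fintype.sum_equiv (Equiv.addLeft j) _ _ (fun c => rfl)
        _ = ∑ k, A i k := Equiv.sum_comp ψ (A i)
    calc ∑ c : Fin n, F i ((Equiv.addRight c).trans ψ)
        = ∑ c : Fin n, ∑ j, A i (ψ (j + c)) * rs j := by
          refine Finset.sum_congr rfl fun c _ => ?_
          rw [hF]
          exact Finset.sum_congr rfl fun j _ => by rw [Equiv.trans_apply, Equiv.coe_addRight]
      _ = ∑ j, (∑ c : Fin n, A i (ψ (j + c))) * rs j := by
          rw [Finset.sum_comm]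
          exact Finset.sum_congr rfl fun j _ => (Finset.sum_mul _ _ _).symm
      _ = ∑ j, rs i * rs j := Finset.sum_congr rfl fun j _ => by rw [inner j]
      _ = n * (m * rs i) := by rw [← Finset.mul_sum, hsum_rs]; ring
  have constsum : ∀ x : ℝ, ∑ _c : Fin n, x = n * x := by
    intro x; simp [Finset.sum_const, Finset.card_univ]
  have exists_ge : ∀ i, ∃ ψ, m * rs i ≤ F i ψ := by
    intro i
    by_contra hcon; push_neg at hcon
    have h1 : ∑ c : Fin n, F i ((Equiv.addRight c).trans (Equiv.refl _))
        < ∑ _c : Fin n, (m * rs i) :=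
      Finset.sum_lt_sum_of_nonempty hne (fun c _ => hcon _)
    rw [avg i, constsum] at h1
    exact lt_irrefl _ h1
  have exists_le : ∀ i, ∃ ψ, F i ψ ≤ m * rs i := by
    intro i
    by_contra hcon; push_neg at hcon
    have h1 : ∑ _c : Fin n, (m * rs i)
        < ∑ c : Fin n, F i ((Equiv.addRight c).trans (Equiv.refl _)) :=
      Finset.sum_lt_sum_of_nonempty hne (fun c _ => hcon _)
    rw [avg i, constsum] at h1
    exact lt_irrefl _ h1
  have F0 : ∀ (i : Fin n) (ψ : Equiv.Perm (Fin n)),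
      F i ((Equiv.addRight (0 : Fin n)).trans ψ) = F i ψ := by
    intro i ψ
    rw [hF]
    exact Finset.sum_congr rfl fun j _ => by
      simp [Equiv.trans_apply, Equiv.coe_addRight]
  have key : ∀ (i : Fin n) (ψ : Equiv.Perm (Fin n)), F i ψ ≠ m * rs i →
      (∃ ψ', m * rs i < F i ψ') ∧ (∃ ψ', F i ψ' < m * rs i) := by
    intro i ψ hne'
    constructor
    · by_contra hcon; push_neg at hcon
      have hlt : F i ((Equiv.addRight (0:Fin n)).trans ψ) < m * rs i := by
        rw [F0]; exact lt_of_le_of_ne (hcon ψ) hne'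
      have h1 : ∑ c : Fin n, F i ((Equiv.addRight c).trans ψ) < ∑ _c : Fin n, (m * rs i) :=
        Finset.sum_lt_sum (fun c _ => hcon _) ⟨0, Finset.mem_univ _, hlt⟩
      rw [avg i, constsum] at h1
      exact lt_irrefl _ h1
    · by_contra hcon; push_neg at hcon
      have hlt : m * rs i < F i ((Equiv.addRight (0:Fin n)).trans ψ) := by
        rw [F0]; exact lt_of_le_of_ne (hcon ψ) (Ne.symm hne')
      have h1 : ∑ _c : Fin n, (m * rs i) < ∑ c : Fin n, F i ((Equiv.addRight c).trans ψ) :=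
        Finset.sum_lt_sum (fun c _ => hcon _) ⟨0, Finset.mem_univ _, hlt⟩
      rw [avg i, constsum] at h1
      exact lt_irrefl _ h1
  have hrs0 : rs ≠ 0 := fun h0 => (hrspos ⟨0,hn⟩).ne' (congrFun h0 ⟨0,hn⟩)
  by_cases hP : ∀ (i : Fin n) (ψ : Equiv.Perm (Fin n)), F i ψ = m * rs i
  · -- all Perron roots equal `m`
    have hBall : ∀ B ∈ Omega A, perronRoot B = m := by
      intro B hB
      have hBpos := Stmt13Aux.omega_pos hA hB
      have hBr : ∀ i, B.mulVec rs i = m * rs i := by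
        intro i; obtain ⟨φ, hφ⟩ := hB i
        rw [Stmt13Aux.mulVec_apply]
        calc ∑ j, B i j * rs j = ∑ j, A i (φ j) * rs j :=
              Finset.sum_congr rfl fun j _ => by rw [hφ j]
          _ = m * rs i := hP i φ
      refine le_antisymm ?_ ?_
      · exact Stmt13Aux.perronRoot_le hn B hBpos rs hrspos m (fun i => (hBr i).le)
      · refine le_csSup (Stmt13Aux.bddAbove_eigSet hn B hBpos) ?_
        exact ⟨hm0.le, rs, hrs0,
          funext fun i => by rw [hBr i, Pi.smul_apply, smul_eq_mul]⟩
    have himg : perronRoot '' Omega A = {m} := by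
      apply Set.eq_singleton_iff_unique_mem.mpr
      constructor
      · exact ⟨A, Stmt13Aux.self_mem_omega A, hBall A (Stmt13Aux.self_mem_omega A)⟩
      · rintro x ⟨B, hB, rfl⟩; exact hBall B hB
    rw [himg, csSup_singleton, csInf_singleton]
  · -- some row is not constant: both equalities fail
    push_neg at hP
    obtain ⟨i0, ψ0, hne0⟩ := hP
    obtain ⟨⟨ψp0, hψp0⟩, ⟨ψm0, hψm0⟩⟩ := key i0 ψ0 hne0
    have hbdd : BddAbove (perronRoot '' Omega A) := by
      refine ⟨Finset.univ.sup' hne rs, ?_⟩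
      rintro x ⟨B, hB, rfl⟩
      refine Stmt13Aux.perronRoot_le hn B (Stmt13Aux.omega_pos hA hB)
        (fun _ => 1) (fun _ => one_pos) _ ?_
      intro i
      rw [Stmt13Aux.mulVec_apply, mul_one]
      simp only [mul_one]
      calc ∑ j, B i j = rs i := hrowsum B hB i
        _ ≤ _ := Finset.le_sup' rs (Finset.mem_univ i)
    have hbddb : BddBelow (perronRoot '' Omega A) := by
      refine ⟨0, ?_⟩
      rintro x ⟨B, _, rfl⟩
      exact Stmt13Aux.perronRoot_nonneg B
    -- the max equality fails
    have hsup : m < sSup (perronRoot '' Omega A) := by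
      choose ψup hup using exists_ge
      set Ψp : Fin n → Equiv.Perm (Fin n) := Function.update ψup i0 ψp0 with hΨp
      set Bp : Matrix (Fin n) (Fin n) ℝ := Matrix.of fun i j => A i (Ψp i j) with hBp
      have hBpΩ : Bp ∈ Omega A := fun i => ⟨Ψp i, fun j => rfl⟩
      have hBppos := Stmt13Aux.omega_pos hA hBpΩ
      have hmv : ∀ i, Bp.mulVec rs i = F i (Ψp i) := fun i => rfl
      have hBpr : ∀ i, m * rs i ≤ Bp.mulVec rs i := by
        intro i
        rw [hmv i]
        by_cases hi : i = i0
        · subst hi; rw [hΨp, Function.update_self]; exact hψp0.le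
        · rw [hΨp, Function.update_of_ne hi]; exact hup i
      have hBpr0 : m * rs i0 < Bp.mulVec rs i0 := by
        rw [hmv i0, hΨp, Function.update_self]; exact hψp0
      set w : Fin n → ℝ := Bp.mulVec rs with hw
      have hwpos : ∀ k, 0 < w k := fun k => Stmt13Aux.mulVec_pos hn Bp hBppos hrspos k
      have hst : ∀ k, m * w k < Bp.mulVec w k := by
        intro k
        have h1 : Bp.mulVec (fun j => m * rs j) k < Bp.mulVec w k :=
          Stmt13Aux.mulVec_strict_mono hn Bp hBppos (fun j => hBpr j) i0 hBpr0 k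
        have h2 : Bp.mulVec (fun j => m * rs j) k = m * w k :=
          congrFun (Stmt13Aux.mulVec_mul_left Bp rs m) k
        linarith
      set tp : ℝ := Finset.univ.inf' hne (fun k => Bp.mulVec w k / w k) with htp
      have hmtp : m < tp := by
        rw [htp, Finset.lt_inf'_iff]
        intro k _
        rw [lt_div_iff₀ (hwpos k)]
        exact hst k
      have htpw : ∀ k, tp * w k ≤ Bp.mulVec w k := by
        intro k
        have h3 : tp ≤ Bp.mulVec w k / w k := by
          rw [htp]; exact Finset.inf'_le _ (Finset.mem_univ k)
        rwa [le_div_iff₀ (hwpos k)] at h3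
      refine lt_of_lt_of_le hmtp (le_trans ?_ (le_csSup hbdd ⟨Bp, hBpΩ, rfl⟩))
      exact Stmt13Aux.perronRoot_ge hn Bp hBppos tp (hm0.le.trans hmtp.le) w hwpos htpw
    -- the min equality fails
    have hinf : sInf (perronRoot '' Omega A) < m := by
      choose ψdn hdn using exists_le
      set Ψm : Fin n → Equiv.Perm (Fin n) := Function.update ψdn i0 ψm0 with hΨm
      set Bm : Matrix (Fin n) (Fin n) ℝ := Matrix.of fun i j => A i (Ψm i j) with hBm
      have hBmΩ : Bm ∈ Omega A := fun i => ⟨Ψm i, fun j => rfl⟩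
      have hBmpos := Stmt13Aux.omega_pos hA hBmΩ
      have hmv : ∀ i, Bm.mulVec rs i = F i (Ψm i) := fun i => rfl
      have hBmr : ∀ i, Bm.mulVec rs i ≤ m * rs i := by
        intro i
        rw [hmv i]
        by_cases hi : i = i0
        · subst hi; rw [hΨm, Function.update_self]; exact hψm0.le
        · rw [hΨm, Function.update_of_ne hi]; exact hdn i
      have hBmr0 : Bm.mulVec rs i0 < m * rs i0 := by
        rw [hmv i0, hΨm, Function.update_self]; exact hψm0
      set w : Fin n → ℝ := Bm.mulVec rs with hw
      have hwpos : ∀ k, 0 < w k := fun k => Stmt13Aux.mulVec_pos hn Bm hBmpos hrspos k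
      have hst : ∀ k, Bm.mulVec w k < m * w k := by
        intro k
        have h1 : Bm.mulVec w k < Bm.mulVec (fun j => m * rs j) k :=
          Stmt13Aux.mulVec_strict_mono hn Bm hBmpos (fun j => hBmr j) i0 hBmr0 k
        have h2 : Bm.mulVec (fun j => m * rs j) k = m * w k :=
          congrFun (Stmt13Aux.mulVec_mul_left Bm rs m) k
        linarith
      set tm : ℝ := Finset.univ.sup' hne (fun k => Bm.mulVec w k / w k) with htm
      have hmtm : tm < m := by
        rw [htm, Finset.sup'_lt_iff]
        intro k _
        rw [div_lt_iff₀ (hwpos k)]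
        exact hst k
      have htmw : ∀ k, Bm.mulVec w k ≤ tm * w k := by
        intro k
        have h3 : Bm.mulVec w k / w k ≤ tm := by
          rw [htm]; exact Finset.le_sup' (fun k => Bm.mulVec w k / w k) (Finset.mem_univ k)
        rwa [div_le_iff₀ (hwpos k)] at h3
      have hBmle : perronRoot Bm ≤ tm :=
        Stmt13Aux.perronRoot_le hn Bm hBmpos w hwpos tm htmw
      exact lt_of_le_of_lt (csInf_le hbddb ⟨Bm, hBmΩ, rfl⟩) (lt_of_le_of_lt hBmle hmtm)
    refine iff_of_false ?_ ?_
    · intro h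
      rw [← h] at hsup
      exact lt_irrefl _ hsup
    · intro h
      rw [← h] at hinf
      exact lt_irrefl _ hinf
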